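/- Let G₁,…,G_n be finite connected simple graphs. Then the Wiener index of their Cartesian product satisfies W(G₁□⋯□G_n) = ∑_{i=1}^n ( W(G_i) · ∏_{j≠i} |G_j|² ). -/

import Mathlib

open SimpleGraph Finset

/-- The number of shortest `u`-`v` paths (geodesics) in `G`:
the number of paths from `u` to `v` whose length equals the distance `d_G(u,v)`. -/
noncomputable def geodesicCount {V : Type*} (G : SimpleGraph V) (u v : V) : ℕ :=
  Nat.card {p : G.Walk u v // p.IsPath ∧ p.length = G.dist u v}

/-- The number of shortest `u`-`v` paths in `G` that pass through the vertex `x`. -/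
noncomputable def geodesicCountThrough {V : Type*} (G : SimpleGraph V) (u v x : V) : ℕ :=
  Nat.card {p : G.Walk u v // p.IsPath ∧ p.length = G.dist u v ∧ x ∈ p.support}

/-- The Wiener index of `G`: the sum of the distances over all unordered pairs of
vertices (the diagonal contributes `0`, hence the factor `1/2` over ordered pairs). -/
noncomputable def wiener {V : Type*} [Fintype V] (G : SimpleGraph V) : ℚ :=
  (1 / 2) * ∑ u, ∑ v, (G.dist u v : ℚ)

/-- The Cartesian (box) product of a family of graphs: two tuples are adjacent iff
they agree in all but one coordinate and differ by an edge in that coordinate. -/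
def boxProdPi {ι : Type*} {V : ι → Type*} (G : ∀ i, SimpleGraph (V i)) :
    SimpleGraph (∀ i, V i) where
  Adj u v := ∃ i, (G i).Adj (u i) (v i) ∧ ∀ j, j ≠ i → u j = v j
  symm := by
    constructor
    rintro u v ⟨i, hadj, heq⟩
    exact ⟨i, hadj.symm, fun j hj => (heq j hj).symm⟩
  loopless := by
    constructor
    rintro u ⟨i, hadj, -⟩
    exact (G i).loopless.irrefl _ hadj

section Aux

variable {n : ℕ} {V : Fin n → Type*} (G : ∀ i, SimpleGraph (V i))

/-- Lift a walk in one coordinate to a walk in the box product. -/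
def liftWalk (u : ∀ j, V j) (i : Fin n) :
    ∀ {a b : V i}, (G i).Walk a b →
      (boxProdPi G).Walk (Function.update u i a) (Function.update u i b)
  | _, _, SimpleGraph.Walk.nil => SimpleGraph.Walk.nil
  | _, _, SimpleGraph.Walk.cons h w =>
    SimpleGraph.Walk.cons
      ⟨i, by simpa using h, fun j hj => by simp [Function.update_of_ne hj]⟩
      (liftWalk u i w)

lemma liftWalk_length (u : ∀ j, V j) (i : Fin n) {a b : V i} (w : (G i).Walk a b) :
    (liftWalk G u i w).length = w.length := by
  induction w with
  | nil => rfl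
  | cons h w ih => simp only [liftWalk]; exact congrArg (· + 1) ih

lemma reach_aux (hconn : ∀ i, (G i).Connected) (s : Finset (Fin n)) :
    ∀ u v : ∀ j, V j, (∀ j ∉ s, u j = v j) → (boxProdPi G).Reachable u v := by
  classical
  induction s using Finset.induction with
  | empty =>
    intro u v h
    have : u = v := funext fun j => h j (by simp)
    exact this ▸ SimpleGraph.Reachable.refl u
  | @insert i s hi ih =>
    intro u v h
    have h1 : (boxProdPi G).Reachable u (Function.update v i (u i)) := by
      refine ih u _ fun j hj => ?_
      by_cases hji : j = i
      · subst hji; simp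
      · have hnot : j ∉ insert i s := by simp [hji, hj]
        rw [h j hnot, Function.update_of_ne hji]
    have h2 : (boxProdPi G).Reachable (Function.update v i (u i)) v := by
      obtain ⟨w⟩ := hconn i (u i) (v i)
      exact ((liftWalk G v i w).copy rfl (Function.update_eq_self i v)).reachable
    exact h1.trans h2

lemma boxProdPi_connected (hconn : ∀ i, (G i).Connected) :
    (boxProdPi G).Connected := by
  have : ∀ i, Nonempty (V i) := fun i => (hconn i).nonempty
  rw [SimpleGraph.connected_iff]
  exact ⟨fun u v => reach_aux G hconn Finset.univ u v (by simp),
    ⟨fun i => Classical.arbitrary _⟩⟩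

lemma dist_le_aux (hconn : ∀ i, (G i).Connected) (s : Finset (Fin n)) :
    ∀ u v : ∀ j, V j, (∀ j ∉ s, u j = v j) →
      (boxProdPi G).dist u v ≤ ∑ i ∈ s, (G i).dist (u i) (v i) := by
  classical
  induction s using Finset.induction with
  | empty =>
    intro u v h
    have : u = v := funext fun j => h j (by simp)
    simp [this]
  | @insert i s hi ih =>
    intro u v h
    set v' := Function.update v i (u i) with hv'
    have h1 : (boxProdPi G).dist u v' ≤ ∑ j ∈ s, (G j).dist (u j) (v j) := by
      have := ih u v' fun j hj => by
        by_cases hji : j = i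
        · subst hji; simp [hv']
        · have hnot : j ∉ insert i s := by simp [hji, hj]
          rw [h j hnot, hv', Function.update_of_ne hji]
      refine this.trans (le_of_eq (Finset.sum_congr rfl fun j hj => ?_))
      have hji : j ≠ i := fun hc => hi (hc ▸ hj)
      rw [hv', Function.update_of_ne hji]
    have h2 : (boxProdPi G).dist v' v ≤ (G i).dist (u i) (v i) := by
      obtain ⟨w, hw⟩ := (hconn i).exists_walk_length_eq_dist (u i) (v i)
      have := SimpleGraph.dist_le ((liftWalk G v i w).copy rfl (Function.update_eq_self i v))
      rwa [SimpleGraph.Walk.length_copy, liftWalk_length, hw] at this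
    calc (boxProdPi G).dist u v
        ≤ (boxProdPi G).dist u v' + (boxProdPi G).dist v' v :=
          (boxProdPi_connected G hconn).dist_triangle
      _ ≤ ∑ j ∈ s, (G j).dist (u j) (v j) + (G i).dist (u i) (v i) := add_le_add h1 h2
      _ = ∑ j ∈ insert i s, (G j).dist (u j) (v j) := by
          rw [Finset.sum_insert hi, add_comm]

lemma sum_dist_le_walk (hconn : ∀ i, (G i).Connected) :
    ∀ {u v : ∀ j, V j} (w : (boxProdPi G).Walk u v),
      ∑ i, (G i).dist (u i) (v i) ≤ w.length := by
  intro u v w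
  induction w with
  | nil => simp
  | @cons u x v h w ih =>
    obtain ⟨i₀, hadj, heq⟩ := id h
    have step : ∑ i, (G i).dist (u i) (x i) = 1 := by
      rw [Finset.sum_eq_single i₀]
      · exact SimpleGraph.dist_eq_one_iff_adj.mpr hadj
      · intro j _ hj
        rw [heq j hj]; exact SimpleGraph.dist_self
      · simp
    calc ∑ i, (G i).dist (u i) (v i)
        ≤ ∑ i, ((G i).dist (u i) (x i) + (G i).dist (x i) (v i)) :=
          Finset.sum_le_sum fun i _ => (hconn i).dist_triangle
      _ = 1 + ∑ i, (G i).dist (x i) (v i) := by rw [Finset.sum_add_distrib, step]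
      _ ≤ 1 + w.length := by omega
      _ = (SimpleGraph.Walk.cons h w).length := by
          simp [SimpleGraph.Walk.length_cons, add_comm]

lemma boxProdPi_dist (hconn : ∀ i, (G i).Connected) (u v : ∀ j, V j) :
    (boxProdPi G).dist u v = ∑ i, (G i).dist (u i) (v i) := by
  refine le_antisymm (dist_le_aux G hconn Finset.univ u v (by simp)) ?_
  obtain ⟨w, hw⟩ := ((boxProdPi_connected G hconn) u v).exists_walk_length_eq_dist
  rw [← hw]
  exact sum_dist_le_walk G hconn w

variable [∀ i, Fintype (V i)]

lemma sum_eval (i : Fin n) (f : V i → ℚ) :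
    ∑ u : ∀ j, V j, f (u i) =
      (∏ j ∈ Finset.univ.erase i, (Fintype.card (V j) : ℚ)) * ∑ a, f a := by
  classical
  rw [← Equiv.sum_comp (Equiv.piSplitAt i V).symm (fun u => f (u i))]
  have key : ∀ p : V i × ∀ j : { j // j ≠ i }, V j,
      f ((Equiv.piSplitAt i V).symm p i) = f p.1 := by
    intro p
    congr 1
    rw [Equiv.piSplitAt_symm_apply, dif_pos rfl]
  simp_rw [key]
  have hcard : ((Fintype.card (∀ j : { j // j ≠ i }, V j) : ℚ)) =
      ∏ j ∈ Finset.univ.erase i, (Fintype.card (V j) : ℚ) := by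
    rw [Fintype.card_pi, Nat.cast_prod]
    exact (Finset.prod_subtype (Finset.univ.erase i)
      (fun j => by simp [Finset.mem_erase]) fun j => (Fintype.card (V j) : ℚ)).symm
  rw [Fintype.sum_prod_type]
  simp_rw [Finset.sum_const, nsmul_eq_mul, Finset.card_univ]
  rw [← Finset.mul_sum, hcard]

end Aux

/-- For finite connected graphs `G₁, …, Gₙ`:
`W(G₁ □ ⋯ □ Gₙ) = ∑ᵢ ( W(Gᵢ) · ∏_{j ≠ i} |Gⱼ|² )`. -/
theorem wiener_boxProdPi {n : ℕ} {V : Fin n → Type*} [∀ i, Fintype (V i)]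
    (G : ∀ i, SimpleGraph (V i)) (hconn : ∀ i, (G i).Connected) :
    wiener (boxProdPi G) =
      ∑ i, wiener (G i) * ∏ j ∈ Finset.univ.erase i, (Fintype.card (V j) : ℚ) ^ 2 := by
  classical
  unfold wiener
  simp_rw [boxProdPi_dist G hconn, Nat.cast_sum]
  set K : Fin n → ℚ := fun i => ∏ j ∈ Finset.univ.erase i, (Fintype.card (V j) : ℚ) with hK
  have main : ∀ i : Fin n,
      ∑ u : ∀ j, V j, ∑ v : ∀ j, V j, ((G i).dist (u i) (v i) : ℚ)
        = K i ^ 2 * ∑ a, ∑ b, ((G i).dist a b : ℚ) := by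
    intro i
    have inner : ∀ u : ∀ j, V j,
        ∑ v : ∀ j, V j, ((G i).dist (u i) (v i) : ℚ)
          = K i * ∑ b, ((G i).dist (u i) b : ℚ) := fun u =>
      sum_eval i (fun b => ((G i).dist (u i) b : ℚ))
    simp_rw [inner]
    rw [← Finset.mul_sum, sum_eval i (fun a => ∑ b, ((G i).dist a b : ℚ))]
    ring
  have swap : ∑ u : ∀ j, V j, ∑ v : ∀ j, V j, ∑ i, ((G i).dist (u i) (v i) : ℚ)
      = ∑ i, ∑ u : ∀ j, V j, ∑ v : ∀ j, V j, ((G i).dist (u i) (v i) : ℚ) :=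
    calc ∑ u : ∀ j, V j, ∑ v : ∀ j, V j, ∑ i, ((G i).dist (u i) (v i) : ℚ)
        = ∑ u : ∀ j, V j, ∑ i, ∑ v : ∀ j, V j, ((G i).dist (u i) (v i) : ℚ) :=
          Finset.sum_congr rfl fun u _ => Finset.sum_comm
      _ = _ := Finset.sum_comm
  rw [swap, Finset.mul_sum]
  refine Finset.sum_congr rfl fun i _ => ?_
  rw [main i]
  show 1 / 2 * (K i ^ 2 * ∑ a, ∑ b, ((G i).dist a b : ℚ))
    = (1 / 2 * ∑ a, ∑ b, ((G i).dist a b : ℚ)) * ∏ j ∈ Finset.univ.erase i, (Fintype.card (V j) : ℚ) ^ 2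
  simp only [hK]
  rw [Finset.prod_pow]
  ring
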